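/- Let A be a finite-dimensional complex normed algebra and let a ∈ A. Then the spatial numerical range V_A(a) is a compact subset of ℂ. -/
import Mathlib


/-- The spatial numerical range `V_A(a) = ⋃ {V_A(a; x) : x ∈ A, ‖x‖ = 1}` where
`V_A(a; x) = {φ (a * x) : φ ∈ D_A(x)}`. -/
def spatialNumericalRange {A : Type*} [NonUnitalNormedRing A] [NormedSpace ℂ A]
    (a : A) : Set ℂ :=
  {z | ∃ x : A, ‖x‖ = 1 ∧ ∃ φ : A →L[ℂ] ℂ, ‖φ‖ = 1 ∧ φ x = 1 ∧ φ (a * x) = z}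

theorem stmt7 {A : Type*} [NonUnitalNormedRing A] [NormedSpace ℂ A]
    [FiniteDimensional ℂ A] (a : A) :
    IsCompact (spatialNumericalRange a) := by
  set K : Set (A × (A →L[ℂ] ℂ)) :=
    {p | ‖p.1‖ = 1 ∧ ‖p.2‖ = 1 ∧ p.2 p.1 = 1} with hKdef
  have happly : Continuous fun p : A × (A →L[ℂ] ℂ) => p.2 p.1 :=
    isBoundedBilinearMap_apply.continuous.comp (continuous_snd.prodMk continuous_fst)
  have hKclosed : IsClosed K := by
    have h1 : IsClosed {p : A × (A →L[ℂ] ℂ) | ‖p.1‖ = 1} :=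
      isClosed_eq (continuous_fst.norm) continuous_const
    have h2 : IsClosed {p : A × (A →L[ℂ] ℂ) | ‖p.2‖ = 1} :=
      isClosed_eq (continuous_snd.norm) continuous_const
    have h3 : IsClosed {p : A × (A →L[ℂ] ℂ) | p.2 p.1 = 1} :=
      isClosed_eq happly continuous_const
    exact (h1.inter (h2.inter h3)).mono (by intro p hp; exact hp)
  have hKbdd : Bornology.IsBounded K := by
    have : K ⊆ Metric.closedBall 0 1 ×ˢ Metric.closedBall 0 1 := by
      rintro ⟨x, φ⟩ ⟨hx, hφ, -⟩
      constructor <;> simp [Metric.mem_closedBall, dist_zero_right, hx.le, hφ.le]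
    exact (Metric.isBounded_closedBall.prod Metric.isBounded_closedBall).subset this
  haveI : ProperSpace A := FiniteDimensional.proper ℂ A
  haveI : FiniteDimensional ℂ (A →L[ℂ] ℂ) := inferInstance
  haveI : ProperSpace (A →L[ℂ] ℂ) := FiniteDimensional.proper ℂ _
  have hK : IsCompact K := Metric.isCompact_of_isClosed_isBounded hKclosed hKbdd
  have hf : Continuous fun p : A × (A →L[ℂ] ℂ) => p.2 (a * p.1) :=
    isBoundedBilinearMap_apply.continuous.comp
      (continuous_snd.prodMk (continuous_const.mul continuous_fst))
  have himg : spatialNumericalRange a = (fun p : A × (A →L[ℂ] ℂ) => p.2 (a * p.1)) '' K := by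
    ext z
    constructor
    · rintro ⟨x, hx, φ, hφ, hφx, hz⟩
      exact ⟨⟨x, φ⟩, ⟨hx, hφ, hφx⟩, hz⟩
    · rintro ⟨⟨x, φ⟩, ⟨hx, hφ, hφx⟩, hz⟩
      exact ⟨x, hx, φ, hφ, hφx, hz⟩
  rw [himg]
  exact hK.image hf
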